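/- For the ansatz Î, for every pair of distinct indices i ≠ j one has ∫_{S²} (Ω·R_i)(Ω·R_j) Î(Ω) dΩ = 0; consequently, writing E² = ∫_{S²} Ω Ωᵀ Î(Ω) dΩ, the matrix Rᵀ E² R is diagonal, where R = [R₁, R₂, R₃], so each R_j is an eigenvector of E². -/

import Mathlib

open MeasureTheory Metric
open scoped InnerProductSpace Real
open scoped ENNReal Pointwise

noncomputable section

/-- ℝ³ as a Euclidean space. -/
abbrev E3 := EuclideanSpace ℝ (Fin 3)

/-- The surface measure on the unit sphere S² ⊆ ℝ³. -/
def sphereMeasure : Measure (sphere (0 : E3) 1) :=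
  (volume : Measure E3).toSphere

namespace Ansatz

abbrev S2 := sphere (0 : E3) 1

lemma mem_sph (T : E3 ≃ₗᵢ[ℝ] E3) (Ω : S2) : T (Ω : E3) ∈ sphere (0 : E3) 1 := by
  rw [mem_sphere_zero_iff_norm, T.norm_map, ← mem_sphere_zero_iff_norm]
  exact Ω.2

def sMapFun (T : E3 ≃ₗᵢ[ℝ] E3) (Ω : S2) : S2 := ⟨T (Ω : E3), mem_sph T Ω⟩

def sMap (T : E3 ≃ₗᵢ[ℝ] E3) : S2 ≃ₜ S2 where
  toFun := sMapFun T
  invFun := sMapFun T.symm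
  left_inv := fun Ω => Subtype.ext (T.symm_apply_apply (Ω : E3))
  right_inv := fun Ω => Subtype.ext (T.apply_symm_apply (Ω : E3))
  continuous_toFun := (T.continuous.comp continuous_subtype_val).subtype_mk _
  continuous_invFun := (T.symm.continuous.comp continuous_subtype_val).subtype_mk _

@[simp] lemma sMap_coe (T : E3 ≃ₗᵢ[ℝ] E3) (Ω : S2) : ((sMap T Ω : S2) : E3) = T (Ω : E3) := rfl

lemma mem_val_image {s : Set S2} {y : E3} :
    y ∈ Subtype.val '' s ↔ ∃ hy : y ∈ sphere (0 : E3) 1, (⟨y, hy⟩ : S2) ∈ s := by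
  constructor
  · rintro ⟨Ω, hΩ, rfl⟩
    exact ⟨Ω.2, by simpa using hΩ⟩
  · rintro ⟨hy, h⟩
    exact ⟨⟨y, hy⟩, h, rfl⟩

lemma smul_image_val (s : Set S2) :
    Set.Ioo (0:ℝ) 1 • (Subtype.val '' s) =
      {x : E3 | 0 < ‖x‖ ∧ ‖x‖ < 1 ∧ ‖x‖⁻¹ • x ∈ Subtype.val '' s} := by
  ext x
  rw [Set.mem_smul]
  constructor
  · rintro ⟨r, hr, y, hy, rfl⟩
    have hy1 : ‖y‖ = 1 := by
      rcases hy with ⟨Ω, _, rfl⟩; exact mem_sphere_zero_iff_norm.mp Ω.2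
    have hn : ‖r • y‖ = r := by
      rw [norm_smul, hy1, mul_one, Real.norm_eq_abs, abs_of_pos hr.1]
    refine ⟨by rw [hn]; exact hr.1, by rw [hn]; exact hr.2, ?_⟩
    rw [hn, smul_smul, inv_mul_cancel₀ (ne_of_gt hr.1), one_smul]; exact hy
  · rintro ⟨h0, h1, hmem⟩
    exact ⟨‖x‖, ⟨h0, h1⟩, ‖x‖⁻¹ • x, hmem,
      by rw [smul_smul, mul_inv_cancel₀ (ne_of_gt h0), one_smul]⟩

lemma measurableSet_sphereSet : MeasurableSet (sphere (0 : E3) 1) :=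
  (isClosed_sphere).measurableSet

lemma val_image_measurable {s : Set S2} (hs : MeasurableSet s) :
    MeasurableSet (Subtype.val '' s) :=
  (MeasurableEmbedding.subtype_coe measurableSet_sphereSet).measurableSet_image' hs

lemma normalize_measurable : Measurable (fun x : E3 => ‖x‖⁻¹ • x) :=
  (measurable_norm.inv).smul measurable_id

lemma coneSet_measurable {A : Set E3} (hA : MeasurableSet A) :
    MeasurableSet {x : E3 | 0 < ‖x‖ ∧ ‖x‖ < 1 ∧ ‖x‖⁻¹ • x ∈ A} := by
  have : {x : E3 | 0 < ‖x‖ ∧ ‖x‖ < 1 ∧ ‖x‖⁻¹ • x ∈ A} =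
      {x : E3 | 0 < ‖x‖} ∩ ({x : E3 | ‖x‖ < 1} ∩ (fun x : E3 => ‖x‖⁻¹ • x) ⁻¹' A) := rfl
  rw [this]
  exact (measurableSet_lt measurable_const measurable_norm).inter
    ((measurableSet_lt measurable_norm measurable_const).inter (normalize_measurable hA))

lemma sphereMeasure_apply {s : Set S2} (hs : MeasurableSet s) :
    sphereMeasure s =
      3 * volume {x : E3 | 0 < ‖x‖ ∧ ‖x‖ < 1 ∧ ‖x‖⁻¹ • x ∈ Subtype.val '' s} := by
  rw [sphereMeasure, Measure.toSphere_apply' _ hs, smul_image_val]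
  norm_num [finrank_euclideanSpace_fin]

lemma sphereMap_measurePreserving (T : E3 ≃ₗᵢ[ℝ] E3) :
    MeasurePreserving (sMap T) sphereMeasure sphereMeasure := by
  have hmeas : Measurable (sMap T) := (sMap T).continuous.measurable
  refine ⟨hmeas, ?_⟩
  refine Measure.ext fun s hs => ?_
  rw [Measure.map_apply hmeas hs, sphereMeasure_apply (hmeas hs), sphereMeasure_apply hs]
  congr 1
  have hset : {x : E3 | 0 < ‖x‖ ∧ ‖x‖ < 1 ∧ ‖x‖⁻¹ • x ∈ Subtype.val '' ((sMap T) ⁻¹' s)}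
      = ⇑T ⁻¹' {x : E3 | 0 < ‖x‖ ∧ ‖x‖ < 1 ∧ ‖x‖⁻¹ • x ∈ Subtype.val '' s} := by
    ext x
    simp only [Set.mem_preimage, Set.mem_setOf_eq, T.norm_map]
    have hsm : T (‖x‖⁻¹ • x) = ‖x‖⁻¹ • T x := by exact T.toLinearIsometry.map_smul _ _
    constructor
    · rintro ⟨h0, h1, hmem⟩
      rw [mem_val_image] at hmem
      obtain ⟨hy, hmem⟩ := hmem
      refine ⟨h0, h1, ?_⟩
      rw [← hsm]
      exact ⟨sMap T ⟨_, hy⟩, hmem, rfl⟩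
    · rintro ⟨h0, h1, hmem⟩
      rw [← hsm, mem_val_image] at hmem
      obtain ⟨hy, hmem⟩ := hmem
      have hy' : ‖x‖⁻¹ • x ∈ sphere (0 : E3) 1 := by
        rw [mem_sphere_zero_iff_norm] at hy ⊢
        rwa [T.norm_map] at hy
      refine ⟨h0, h1, mem_val_image.mpr ⟨hy', ?_⟩⟩
      have heq : sMap T ⟨‖x‖⁻¹ • x, hy'⟩ = ⟨T (‖x‖⁻¹ • x), hy⟩ := rfl
      rw [Set.mem_preimage, heq]
      exact hmem
  rw [hset]
  exact T.measurePreserving.measure_preimage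
    ((coneSet_measurable (val_image_measurable hs)).nullMeasurableSet)

def Q2 (v : Fin 2 → ℝ) : ℝ := ∑ b, (v b)^2

lemma Q2_nonneg (v : Fin 2 → ℝ) : 0 ≤ Q2 v :=
  Finset.sum_nonneg fun _ _ => sq_nonneg _

lemma Q2_measurable : Measurable Q2 := by
  unfold Q2
  exact Finset.measurable_sum _ fun b _ => (measurable_pi_apply b).pow_const 2

lemma norm_E2 (x : EuclideanSpace ℝ (Fin 2)) : ‖x‖ = √(∑ b, (x b)^2) := by
  rw [EuclideanSpace.norm_eq]
  congr 1
  exact Finset.sum_congr rfl fun b _ => by rw [Real.norm_eq_abs, sq_abs]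

lemma vol2_lt (R : ℝ) : volume {v : Fin 2 → ℝ | Q2 v < R} = ENNReal.ofReal (π * R) := by
  rcases le_or_gt R 0 with hR | hR
  · have he : {v : Fin 2 → ℝ | Q2 v < R} = ∅ := by
      ext v; simp only [Set.mem_setOf_eq, Set.mem_empty_iff_false, iff_false, not_lt]
      exact hR.trans (Q2_nonneg v)
    rw [he, measure_empty, Eq.comm, ENNReal.ofReal_eq_zero]
    exact mul_nonpos_of_nonneg_of_nonpos Real.pi_pos.le hR
  · have key := (EuclideanSpace.volume_preserving_symm_measurableEquiv_toLp (Fin 2)).measure_preimage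
      (s := {v : Fin 2 → ℝ | Q2 v < R})
      ((Q2_measurable (measurableSet_Iio (a := R))).nullMeasurableSet)
    rw [← key]
    have hset : (⇑((MeasurableEquiv.toLp 2 (Fin 2 → ℝ)).symm)) ⁻¹' {v : Fin 2 → ℝ | Q2 v < R}
        = ball (0 : EuclideanSpace ℝ (Fin 2)) (√R) := by
      ext x
      rw [Set.mem_preimage, mem_ball_zero_iff, norm_E2]
      have h1 : Q2 ((MeasurableEquiv.toLp 2 (Fin 2 → ℝ)).symm x) = ∑ b, (x b)^2 := rfl
      rw [Set.mem_setOf_eq, h1]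
      have hsum : (0:ℝ) ≤ ∑ b, (x b)^2 := Finset.sum_nonneg fun _ _ => sq_nonneg _
      constructor
      · intro h
        exact Real.sqrt_lt_sqrt hsum h
      · intro h
        nlinarith [Real.sq_sqrt hsum, Real.sq_sqrt hR.le, Real.sqrt_nonneg (∑ b, (x b)^2),
          Real.sqrt_nonneg R]
    rw [hset, EuclideanSpace.volume_ball]
    have hcard : Fintype.card (Fin 2) = 2 := Fintype.card_fin 2
    rw [hcard]
    have hg : Real.Gamma ((2:ℕ) / 2 + 1) = 1 := by norm_num [Real.Gamma_two]
    rw [hg]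
    have h1 : (√π) ^ 2 = π := Real.sq_sqrt Real.pi_pos.le
    rw [h1]
    rw [← ENNReal.ofReal_pow (Real.sqrt_nonneg R), Real.sq_sqrt hR.le, div_one,
       ← ENNReal.ofReal_mul hR.le, mul_comm R π]

lemma vol2_le (R : ℝ) (hR : 0 ≤ R) :
    volume {v : Fin 2 → ℝ | Q2 v ≤ R} = ENNReal.ofReal (π * R) := by
  have key := (EuclideanSpace.volume_preserving_symm_measurableEquiv_toLp (Fin 2)).measure_preimage
    (s := {v : Fin 2 → ℝ | Q2 v ≤ R})
    ((Q2_measurable (measurableSet_Iic (a := R))).nullMeasurableSet)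
  rw [← key]
  have hset : (⇑((MeasurableEquiv.toLp 2 (Fin 2 → ℝ)).symm)) ⁻¹' {v : Fin 2 → ℝ | Q2 v ≤ R}
      = closedBall (0 : EuclideanSpace ℝ (Fin 2)) (√R) := by
    ext x
    rw [Set.mem_preimage, mem_closedBall_zero_iff, norm_E2]
    have h1 : Q2 ((MeasurableEquiv.toLp 2 (Fin 2 → ℝ)).symm x) = ∑ b, (x b)^2 := rfl
    rw [Set.mem_setOf_eq, h1]
    constructor
    · exact fun h => Real.sqrt_le_sqrt h
    · intro h
      have := Real.sq_sqrt (Finset.sum_nonneg (fun (b : Fin 2) (_ : b ∈ Finset.univ) => sq_nonneg (x b)))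
      nlinarith [Real.sq_sqrt hR, Real.sqrt_nonneg (∑ b, (x b)^2), Real.sqrt_nonneg R]
  rw [hset, EuclideanSpace.volume_closedBall]
  have hcard : Fintype.card (Fin 2) = 2 := Fintype.card_fin 2
  rw [hcard]
  have hg : Real.Gamma ((2:ℕ) / 2 + 1) = 1 := by norm_num [Real.Gamma_two]
  rw [hg]
  have h1 : (√π) ^ 2 = π := Real.sq_sqrt Real.pi_pos.le
  rw [h1]
  rw [← ENNReal.ofReal_pow (Real.sqrt_nonneg R), Real.sq_sqrt hR, div_one,
     ← ENNReal.ofReal_mul hR, mul_comm R π]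

lemma vol2_band (A R : ℝ) (hA : 0 ≤ A) (hAR : A ≤ R) :
    volume {v : Fin 2 → ℝ | A ≤ Q2 v ∧ Q2 v < R} = ENNReal.ofReal (π * (R - A)) := by
  have hset : {v : Fin 2 → ℝ | A ≤ Q2 v ∧ Q2 v < R}
      = {v : Fin 2 → ℝ | Q2 v < R} \ {v : Fin 2 → ℝ | Q2 v < A} := by
    ext v; simp only [Set.mem_setOf_eq, Set.mem_diff, not_lt]; tauto
  have hsub : {v : Fin 2 → ℝ | Q2 v < A} ⊆ {v : Fin 2 → ℝ | Q2 v < R} :=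
    fun v hv => lt_of_lt_of_le hv hAR
  have hd := measure_diff (μ := volume) hsub
    ((Q2_measurable (measurableSet_Iio (a := A))).nullMeasurableSet)
    (by rw [vol2_lt]; exact ENNReal.ofReal_ne_top)
  rw [hset, hd, vol2_lt, vol2_lt, ← ENNReal.ofReal_sub _ (mul_nonneg Real.pi_pos.le hA)]
  congr 1; ring

lemma vol2_band' (A R : ℝ) (hA : 0 ≤ A) (hAR : A < R) :
    volume {v : Fin 2 → ℝ | A < Q2 v ∧ Q2 v < R} = ENNReal.ofReal (π * (R - A)) := by
  have hset : {v : Fin 2 → ℝ | A < Q2 v ∧ Q2 v < R}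
      = {v : Fin 2 → ℝ | Q2 v < R} \ {v : Fin 2 → ℝ | Q2 v ≤ A} := by
    ext v; simp only [Set.mem_setOf_eq, Set.mem_diff, not_le]; tauto
  have hsub : {v : Fin 2 → ℝ | Q2 v ≤ A} ⊆ {v : Fin 2 → ℝ | Q2 v < R} :=
    fun v hv => lt_of_le_of_lt hv hAR
  have hd := measure_diff (μ := volume) hsub
    ((Q2_measurable (measurableSet_Iic (a := A))).nullMeasurableSet)
    (by rw [vol2_le _ hA]; exact ENNReal.ofReal_ne_top)
  rw [hset, hd, vol2_lt, vol2_le _ hA, ← ENNReal.ofReal_sub _ (mul_nonneg Real.pi_pos.le hA)]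
  congr 1; ring

def slice (t h : ℝ) : Set (Fin 2 → ℝ) :=
  {v | 0 < h^2 + Q2 v ∧ h^2 + Q2 v < 1 ∧ h ≤ t * √(h^2 + Q2 v)}

lemma slice_measurableSet (t h : ℝ) : MeasurableSet (slice t h) := by
  unfold slice
  refine MeasurableSet.inter ?_ (MeasurableSet.inter ?_ ?_)
  · exact measurableSet_lt measurable_const (measurable_const.add Q2_measurable)
  · exact measurableSet_lt (measurable_const.add Q2_measurable) measurable_const
  · exact measurableSet_le measurable_const
      (measurable_const.mul ((measurable_const.add Q2_measurable).sqrt))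

lemma third_iff_neg {t h : ℝ} (ht : t < 0) (hh : h ≤ 0) {Q : ℝ} (hQ : 0 ≤ Q) :
    (h ≤ t * √(h^2 + Q)) ↔ t^2 * (h^2 + Q) ≤ h^2 := by
  have htne : t ≠ 0 := ne_of_lt ht
  have ht2 : (0:ℝ) < t^2 := by rw [sq]; exact mul_pos_of_neg_of_neg ht ht
  have hX : (0:ℝ) ≤ h^2 + Q := by positivity
  have hs := Real.sq_sqrt hX
  have hsn := Real.sqrt_nonneg (h^2 + Q)
  constructor
  · intro hle
    have k1 : 0 ≤ -(t * √(h^2+Q)) := by nlinarith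
    have k2 : -(t * √(h^2+Q)) ≤ -h := by linarith
    have k3 := mul_le_mul k2 k2 k1 (by linarith : (0:ℝ) ≤ -h)
    nlinarith [k3, hs]
  · intro hle
    have hht : 0 ≤ h / t := by
      rw [← neg_div_neg_eq]
      exact div_nonneg (by linarith) (by linarith)
    have h1 : √(h^2 + Q) ≤ h / t := by
      have h2 : h^2 + Q ≤ (h/t)^2 := by
        rw [div_pow, le_div_iff₀ ht2]
        linarith
      calc √(h^2+Q) ≤ √((h/t)^2) := Real.sqrt_le_sqrt h2
        _ = h/t := Real.sqrt_sq hht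
    have h3 : t * (h/t) = h := by rw [mul_comm, div_mul_cancel₀ _ htne]
    nlinarith [mul_nonneg (sub_nonneg.mpr h1) (neg_nonneg.mpr ht.le)]

lemma third_iff_pos {t h : ℝ} (ht : 0 < t) (hh : 0 < h) {Q : ℝ} (hQ : 0 ≤ Q) :
    (h ≤ t * √(h^2 + Q)) ↔ h^2 ≤ t^2 * (h^2 + Q) := by
  have hX : (0:ℝ) ≤ h^2 + Q := by positivity
  have hs := Real.sq_sqrt hX
  have hsn := Real.sqrt_nonneg (h^2 + Q)
  constructor
  · intro hle
    nlinarith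
  · intro hle
    have h1 : h/t ≤ √(h^2 + Q) := by
      rw [Real.le_sqrt (by positivity) hX, div_pow, div_le_iff₀ (by positivity : (0:ℝ) < t^2)]
      linarith
    calc h = t * (h/t) := by rw [mul_comm, div_mul_cancel₀ _ (ne_of_gt ht)]
      _ ≤ t * √(h^2+Q) := mul_le_mul_of_nonneg_left h1 ht.le

lemma slice_empty_of_abs (t h : ℝ) (hh : 1 ≤ h^2) : volume (slice t h) = 0 := by
  convert measure_empty (μ := (volume : Measure (Fin 2 → ℝ)))
  ext v
  simp only [slice, Set.mem_setOf_eq, Set.mem_empty_iff_false, iff_false]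
  rintro ⟨_, hmem, _⟩
  nlinarith [Q2_nonneg v]

lemma vol_slice_nonneg_left {t h : ℝ} (ht : 0 ≤ t) (hh : h ≤ 0) :
    volume (slice t h) = ENNReal.ofReal (π * (1 - h^2)) := by
  rcases lt_or_eq_of_le hh with hh0 | rfl
  · have hs : slice t h = {v : Fin 2 → ℝ | Q2 v < 1 - h^2} := by
      ext v
      have hQ := Q2_nonneg v
      have hne : h ≠ 0 := ne_of_lt hh0
      simp only [slice, Set.mem_setOf_eq]
      constructor
      · rintro ⟨_, h2, _⟩; linarith
      · intro h1
        have hp2 : (0:ℝ) < h^2 := by rw [sq]; exact mul_pos_of_neg_of_neg hh0 hh0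
        exact ⟨by linarith, by linarith,
          le_trans hh0.le (mul_nonneg ht (Real.sqrt_nonneg _))⟩
    rw [hs, vol2_lt]
  · have hs : slice t 0 = {v : Fin 2 → ℝ | (0:ℝ) < Q2 v ∧ Q2 v < 1} := by
      ext v
      have hQ := Q2_nonneg v
      simp only [slice, Set.mem_setOf_eq]
      constructor
      · rintro ⟨h1, h2, _⟩
        constructor <;> nlinarith
      · rintro ⟨h1, h2⟩
        refine ⟨by nlinarith, by nlinarith, mul_nonneg ht (Real.sqrt_nonneg _)⟩
    rw [hs, vol2_band' 0 1 le_rfl one_pos]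
    norm_num

lemma vol_slice_neg_far {t h : ℝ} (ht : t < 0) (hht : h ≤ t) :
    volume (slice t h) = ENNReal.ofReal (π * (1 - h^2)) := by
  have hs : slice t h = {v : Fin 2 → ℝ | Q2 v < 1 - h^2} := by
    ext v
    have hQ := Q2_nonneg v
    have hh0 : h < 0 := lt_of_le_of_lt hht ht
    have hne : h ≠ 0 := ne_of_lt hh0
    have ht2 : t^2 ≤ h^2 := by nlinarith
    simp only [slice, Set.mem_setOf_eq]
    constructor
    · rintro ⟨_, h2, _⟩; linarith
    · intro h1
      have hp2 : (0:ℝ) < h^2 := by rw [sq]; exact mul_pos_of_neg_of_neg hh0 hh0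
      refine ⟨by linarith, by linarith, ?_⟩
      rw [third_iff_neg ht hh0.le hQ]
      nlinarith
  rw [hs, vol2_lt]

lemma vol_slice_neg_near {t h : ℝ} (htm : -1 ≤ t) (ht : t < 0) (h1 : t < h) (h2 : h ≤ 0) :
    volume (slice t h) = ENNReal.ofReal (π * (h^2 * (1 - t^2) / t^2)) := by
  have htne : t ≠ 0 := ne_of_lt ht
  have ht2 : (0:ℝ) < t^2 := by positivity
  have ht1 : t^2 ≤ 1 := by nlinarith
  set B := h^2 * (1 - t^2) / t^2 with hBdef
  have hB0 : 0 ≤ B := by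
    apply div_nonneg _ ht2.le
    apply mul_nonneg (sq_nonneg h)
    linarith
  have hh2t2 : h^2 < t^2 := by nlinarith
  have htB : t^2 * B = h^2 * (1 - t^2) := by
    rw [hBdef]; field_simp
  have hid : h^2 + B = h^2 / t^2 := by
    rw [hBdef]; field_simp; ring
  have hdiv1 : h^2 / t^2 < 1 := (div_lt_one ht2).mpr hh2t2
  rcases lt_or_eq_of_le h2 with hh0 | rfl
  · have hne : h ≠ 0 := ne_of_lt hh0
    have hs : slice t h = {v : Fin 2 → ℝ | Q2 v ≤ B} := by
      ext v
      have hQ := Q2_nonneg v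
      simp only [slice, Set.mem_setOf_eq]
      constructor
      · rintro ⟨_, _, h3⟩
        rw [third_iff_neg ht hh0.le hQ] at h3
        have : t^2 * Q2 v ≤ t^2 * B := by nlinarith
        exact le_of_mul_le_mul_left this ht2
      · intro h3
        have hp2 : (0:ℝ) < h^2 := by rw [sq]; exact mul_pos_of_neg_of_neg hh0 hh0
        refine ⟨by linarith, by nlinarith, ?_⟩
        rw [third_iff_neg ht hh0.le hQ]
        nlinarith
    rw [hs, vol2_le _ hB0]
  · have hs : slice t 0 = (∅ : Set (Fin 2 → ℝ)) := by
      ext v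
      have hQ := Q2_nonneg v
      simp only [slice, Set.mem_setOf_eq, Set.mem_empty_iff_false, iff_false]
      rintro ⟨hpos, _, hC⟩
      rw [third_iff_neg ht le_rfl hQ] at hC
      nlinarith
    rw [hs, measure_empty, hBdef]
    norm_num

lemma vol_slice_pos_right_empty {t h : ℝ} (ht : t ≤ 0) (hh : 0 < h) :
    volume (slice t h) = 0 := by
  convert measure_empty (μ := (volume : Measure (Fin 2 → ℝ)))
  ext v
  simp only [slice, Set.mem_setOf_eq, Set.mem_empty_iff_false, iff_false]
  rintro ⟨_, _, hC⟩
  have := mul_nonpos_of_nonpos_of_nonneg ht (Real.sqrt_nonneg (h^2 + Q2 v))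
  linarith

lemma vol_slice_pos_near {t h : ℝ} (ht : 0 < t) (ht1 : t < 1) (hh0 : 0 < h) (hht : h < t) :
    volume (slice t h) = ENNReal.ofReal (π * (1 - h^2 / t^2)) := by
  have htne : t ≠ 0 := ne_of_gt ht
  have ht2 : (0:ℝ) < t^2 := by positivity
  set B := h^2 * (1 - t^2) / t^2 with hBdef
  have hB0 : 0 ≤ B := by
    apply div_nonneg _ ht2.le
    apply mul_nonneg (sq_nonneg h)
    nlinarith
  have hh2t2 : h^2 < t^2 := by nlinarith
  have htB : t^2 * B = h^2 * (1 - t^2) := by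
    rw [hBdef]; field_simp
  have hid : h^2 + B = h^2 / t^2 := by
    rw [hBdef]; field_simp; ring
  have hdiv1 : h^2 / t^2 < 1 := (div_lt_one ht2).mpr hh2t2
  have hs : slice t h = {v : Fin 2 → ℝ | B ≤ Q2 v ∧ Q2 v < 1 - h^2} := by
    ext v
    have hQ := Q2_nonneg v
    simp only [slice, Set.mem_setOf_eq]
    constructor
    · rintro ⟨_, h2, h3⟩
      rw [third_iff_pos ht hh0 hQ] at h3
      refine ⟨?_, by linarith⟩
      have : t^2 * B ≤ t^2 * Q2 v := by nlinarith
      exact le_of_mul_le_mul_left this ht2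
    · rintro ⟨h3, h4⟩
      have hp2 : (0:ℝ) < h^2 := by positivity
      refine ⟨by linarith, by linarith, ?_⟩
      rw [third_iff_pos ht hh0 hQ]
      nlinarith
  rw [hs, vol2_band B (1 - h^2) hB0 (by nlinarith)]
  congr 1
  have hfin : 1 - h^2 - B = 1 - h^2/t^2 := by
    rw [hBdef]; field_simp; ring
  rw [hfin]

lemma vol_slice_pos_far {t h : ℝ} (ht : 0 < t) (hht : t ≤ h) :
    volume (slice t h) = 0 := by
  have hh0 : 0 < h := lt_of_lt_of_le ht hht
  convert measure_empty (μ := (volume : Measure (Fin 2 → ℝ)))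
  ext v
  simp only [slice, Set.mem_setOf_eq, Set.mem_empty_iff_false, iff_false]
  rintro ⟨_, h2, h3⟩
  rw [third_iff_pos ht hh0 (Q2_nonneg v)] at h3
  nlinarith [Q2_nonneg v, mul_le_mul hht hht ht.le hh0.le, mul_pos ht ht]

/-! ### lintegral helpers -/

lemma lint_Ioc (a b : ℝ) (hab : a ≤ b) (g : ℝ → ℝ) (hg : Continuous g)
    (h0 : ∀ x ∈ Set.Ioc a b, 0 ≤ g x) :
    ∫⁻ h in Set.Ioc a b, ENNReal.ofReal (g h) = ENNReal.ofReal (∫ h in a..b, g h) := by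
  rw [intervalIntegral.integral_of_le hab,
    ofReal_integral_eq_lintegral_ofReal (hg.integrableOn_Ioc)
      ((ae_restrict_iff' measurableSet_Ioc).mpr (ae_of_all _ h0))]

lemma lint_Ioo (a b : ℝ) (hab : a ≤ b) (g : ℝ → ℝ) (hg : Continuous g)
    (h0 : ∀ x ∈ Set.Ioo a b, 0 ≤ g x) :
    ∫⁻ h in Set.Ioo a b, ENNReal.ofReal (g h) = ENNReal.ofReal (∫ h in a..b, g h) := by
  rw [intervalIntegral.integral_of_le hab, integral_Ioc_eq_integral_Ioo,
    ofReal_integral_eq_lintegral_ofReal (hg.integrableOn_Ioc.mono_set Set.Ioo_subset_Ioc_self)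
      ((ae_restrict_iff' measurableSet_Ioo).mpr (ae_of_all _ h0))]

lemma integ_one_sub_sq (a b : ℝ) :
    ∫ h in a..b, π * (1 - h^2) = π * ((b - b^3/3) - (a - a^3/3)) := by
  rw [intervalIntegral.integral_const_mul]
  congr 1
  rw [intervalIntegral.integral_sub intervalIntegrable_const (intervalIntegral.intervalIntegrable_pow 2),
    integral_pow]
  simp
  ring

lemma integ_sq_mul (c d : ℝ) (a b : ℝ) :
    ∫ h in a..b, π * (h^2 * c / d) = π * (c / d * ((b^3 - a^3)/3)) := by
  have hfun : (fun h : ℝ => π * (h^2 * c / d)) = fun h : ℝ => (π * (c/d)) * h^2 := by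
    funext h; ring
  rw [hfun, intervalIntegral.integral_const_mul, integral_pow]
  norm_num
  ring

lemma integ_one_sub_div (c : ℝ) (a b : ℝ) :
    ∫ h in a..b, π * (1 - h^2/c) = π * ((b - a) - (1/c) * ((b^3 - a^3)/3)) := by
  have hfun : (fun h : ℝ => π * (1 - h^2/c)) = fun h : ℝ => π - (π * (1/c)) * h^2 := by
    funext h; ring
  rw [hfun, intervalIntegral.integral_sub (intervalIntegrable_const)
      ((intervalIntegral.intervalIntegrable_pow 2).const_mul _),
    intervalIntegral.integral_const_mul, integral_pow, intervalIntegral.integral_const]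
  simp only [smul_eq_mul]
  ring

lemma cont1 : Continuous fun h : ℝ => π * (1 - h^2) :=
  continuous_const.mul (continuous_const.sub (continuous_pow 2))

lemma cont2 (c d : ℝ) : Continuous fun h : ℝ => π * (h^2 * c / d) :=
  continuous_const.mul (((continuous_pow 2).mul continuous_const).div_const d)

lemma cont3 (c : ℝ) : Continuous fun h : ℝ => π * (1 - h^2/c) :=
  continuous_const.mul (continuous_const.sub ((continuous_pow 2).div_const c))

/-! ### the slice integral -/

lemma lintegral_slices (t : ℝ) (htm : -1 ≤ t) (ht1 : t < 1) :
    ∫⁻ h : ℝ, volume (slice t h) = ENNReal.ofReal (2*π*(1+t)/3) := by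
  have hind : (fun h : ℝ => volume (slice t h))
      = (Set.Ioo (-1:ℝ) 1).indicator (fun h => volume (slice t h)) := by
    funext h
    by_cases hh : h ∈ Set.Ioo (-1:ℝ) 1
    · rw [Set.indicator_of_mem hh]
    · rw [Set.indicator_of_notMem hh]
      simp only [Set.mem_Ioo, not_and_or, not_lt] at hh
      apply slice_empty_of_abs
      rcases hh with hh | hh <;> nlinarith
  rw [hind, lintegral_indicator measurableSet_Ioo]
  rcases lt_trichotomy t 0 with htneg | rfl | htpos
  · -- t < 0
    have hdec : Set.Ioo (-1:ℝ) 1 = (Set.Ioc (-1) t ∪ Set.Ioc t 0) ∪ Set.Ioo 0 1 := by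
      ext h
      simp only [Set.mem_Ioo, Set.mem_union, Set.mem_Ioc]
      constructor
      · rintro ⟨hl, hr⟩
        rcases le_or_gt h t with h1 | h1
        · exact Or.inl (Or.inl ⟨hl, h1⟩)
        rcases le_or_gt h 0 with h2 | h2
        · exact Or.inl (Or.inr ⟨h1, h2⟩)
        · exact Or.inr ⟨h2, hr⟩
      · rintro ((⟨ha, hb⟩ | ⟨ha, hb⟩) | ⟨ha, hb⟩) <;> constructor <;> linarith
    have hd1 : Disjoint (Set.Ioc (-1:ℝ) t ∪ Set.Ioc t 0) (Set.Ioo 0 1) := by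
      rw [Set.disjoint_left]
      rintro h (hm | hm) ⟨h1, _⟩ <;> (simp only [Set.mem_Ioc] at hm; linarith [hm.2])
    have hd2 : Disjoint (Set.Ioc (-1:ℝ) t) (Set.Ioc t 0) := by
      rw [Set.disjoint_left]
      rintro h hm ⟨h1, _⟩
      simp only [Set.mem_Ioc] at hm; linarith [hm.2]
    rw [hdec, lintegral_union measurableSet_Ioo hd1, lintegral_union measurableSet_Ioc hd2]
    have p1 : ∫⁻ h in Set.Ioc (-1:ℝ) t, volume (slice t h)
        = ENNReal.ofReal (π * ((t - t^3/3) - (-1 - (-1:ℝ)^3/3))) := by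
      rw [setLIntegral_congr_fun measurableSet_Ioc
        (fun h hh => vol_slice_neg_far htneg hh.2)]
      rw [lint_Ioc _ _ htm _ cont1
        (fun x hx => mul_nonneg Real.pi_pos.le (by nlinarith [hx.1, hx.2, htneg])),
        integ_one_sub_sq]
    have p2 : ∫⁻ h in Set.Ioc t 0, volume (slice t h)
        = ENNReal.ofReal (π * ((1-t^2) / t^2 * ((0^3 - t^3)/3))) := by
      rw [setLIntegral_congr_fun measurableSet_Ioc
        (fun h hh => vol_slice_neg_near htm htneg hh.1 hh.2)]
      rw [lint_Ioc _ _ htneg.le _ (cont2 _ _)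
        (fun x hx => by
          have h1 : (0:ℝ) ≤ x^2 := sq_nonneg x
          have h2 : (0:ℝ) ≤ 1 - t^2 := by nlinarith
          have h3 : (0:ℝ) ≤ t^2 := sq_nonneg t
          have h4 := Real.pi_pos
          positivity),
        integ_sq_mul]
    have p3 : ∫⁻ h in Set.Ioo (0:ℝ) 1, volume (slice t h) = 0 := by
      rw [setLIntegral_congr_fun measurableSet_Ioo
        (fun h hh => vol_slice_pos_right_empty htneg.le hh.1)]
      simp
    have key1 : t - t^3/3 - (-1 - (-1:ℝ)^3/3) = (t+1)^2*(2-t)/3 := by ring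
    have hnn1 : (0:ℝ) ≤ π * (t - t^3/3 - (-1 - (-1:ℝ)^3/3)) := by
      rw [key1]
      have : (0:ℝ) ≤ (t+1)^2*(2-t)/3 := by
        apply div_nonneg _ (by norm_num)
        exact mul_nonneg (sq_nonneg _) (by linarith)
      exact mul_nonneg Real.pi_pos.le this
    have hnn2 : (0:ℝ) ≤ π * ((1-t^2) / t^2 * ((0^3 - t^3)/3)) := by
      have h2 : (0:ℝ) ≤ 1 - t^2 := by nlinarith
      have h3 : (0:ℝ) ≤ t^2 := sq_nonneg t
      have h4 : (0:ℝ) ≤ (0^3 - t^3)/3 := by nlinarith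
      exact mul_nonneg Real.pi_pos.le (mul_nonneg (div_nonneg h2 h3) h4)
    rw [p1, p2, p3, add_zero, ← ENNReal.ofReal_add hnn1 hnn2]
    have htne : t ≠ 0 := ne_of_lt htneg
    congr 1
    field_simp
    ring
  · -- t = 0
    have hdec : Set.Ioo (-1:ℝ) 1 = Set.Ioc (-1) 0 ∪ Set.Ioo 0 1 := by
      ext h
      simp only [Set.mem_Ioo, Set.mem_union, Set.mem_Ioc]
      constructor
      · rintro ⟨hl, hr⟩
        rcases le_or_gt h 0 with h1 | h1
        · exact Or.inl ⟨hl, h1⟩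
        · exact Or.inr ⟨h1, hr⟩
      · rintro (⟨ha, hb⟩ | ⟨ha, hb⟩) <;> constructor <;> linarith
    have hd1 : Disjoint (Set.Ioc (-1:ℝ) 0) (Set.Ioo 0 1) := by
      rw [Set.disjoint_left]
      rintro h hm ⟨h1, _⟩
      simp only [Set.mem_Ioc] at hm; linarith [hm.2]
    rw [hdec, lintegral_union measurableSet_Ioo hd1]
    have p1 : ∫⁻ h in Set.Ioc (-1:ℝ) 0, volume (slice 0 h)
        = ENNReal.ofReal (π * ((0 - 0^3/3) - (-1 - (-1:ℝ)^3/3))) := by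
      rw [setLIntegral_congr_fun measurableSet_Ioc
        (fun h hh => vol_slice_nonneg_left le_rfl hh.2)]
      rw [lint_Ioc _ _ (by norm_num) _ cont1
        (fun x hx => mul_nonneg Real.pi_pos.le (by nlinarith [hx.1, hx.2])),
        integ_one_sub_sq]
    have p3 : ∫⁻ h in Set.Ioo (0:ℝ) 1, volume (slice 0 h) = 0 := by
      rw [setLIntegral_congr_fun measurableSet_Ioo
        (fun h hh => vol_slice_pos_right_empty le_rfl hh.1)]
      simp
    rw [p1, p3, add_zero]
    congr 1
    norm_num
    ring
  · -- 0 < t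
    have hdec : Set.Ioo (-1:ℝ) 1 = (Set.Ioc (-1) 0 ∪ Set.Ioo 0 t) ∪ Set.Ico t 1 := by
      ext h
      simp only [Set.mem_Ioo, Set.mem_union, Set.mem_Ioc, Set.mem_Ico]
      constructor
      · rintro ⟨hl, hr⟩
        rcases le_or_gt h 0 with h1 | h1
        · exact Or.inl (Or.inl ⟨hl, h1⟩)
        rcases lt_or_ge h t with h2 | h2
        · exact Or.inl (Or.inr ⟨h1, h2⟩)
        · exact Or.inr ⟨h2, hr⟩
      · rintro ((⟨ha, hb⟩ | ⟨ha, hb⟩) | ⟨ha, hb⟩) <;> constructor <;> linarith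
    have hd1 : Disjoint (Set.Ioc (-1:ℝ) 0 ∪ Set.Ioo 0 t) (Set.Ico t 1) := by
      rw [Set.disjoint_left]
      rintro h (hm | hm) ⟨h1, _⟩ <;>
        (first
          | (simp only [Set.mem_Ioc] at hm; linarith [hm.2])
          | (simp only [Set.mem_Ioo] at hm; linarith [hm.2]))
    have hd2 : Disjoint (Set.Ioc (-1:ℝ) 0) (Set.Ioo 0 t) := by
      rw [Set.disjoint_left]
      rintro h hm ⟨h1, _⟩
      simp only [Set.mem_Ioc] at hm; linarith [hm.2]
    rw [hdec, lintegral_union measurableSet_Ico hd1, lintegral_union measurableSet_Ioo hd2]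
    have p1 : ∫⁻ h in Set.Ioc (-1:ℝ) 0, volume (slice t h)
        = ENNReal.ofReal (π * ((0 - 0^3/3) - (-1 - (-1:ℝ)^3/3))) := by
      rw [setLIntegral_congr_fun measurableSet_Ioc
        (fun h hh => vol_slice_nonneg_left htpos.le hh.2)]
      rw [lint_Ioc _ _ (by norm_num) _ cont1
        (fun x hx => mul_nonneg Real.pi_pos.le (by nlinarith [hx.1, hx.2])),
        integ_one_sub_sq]
    have p2 : ∫⁻ h in Set.Ioo (0:ℝ) t, volume (slice t h)
        = ENNReal.ofReal (π * ((t - 0) - (1/t^2) * ((t^3 - 0^3)/3))) := by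
      rw [setLIntegral_congr_fun measurableSet_Ioo
        (fun h hh => vol_slice_pos_near htpos ht1 hh.1 hh.2)]
      rw [lint_Ioo _ _ htpos.le _ (cont3 _)
        (fun x hx => by
          have h1 : x^2 < t^2 := by nlinarith [hx.1, hx.2]
          have h2 : (0:ℝ) < t^2 := by positivity
          have h3 : x^2/t^2 < 1 := (div_lt_one h2).mpr h1
          nlinarith [Real.pi_pos]),
        integ_one_sub_div]
    have p3 : ∫⁻ h in Set.Ico t 1, volume (slice t h) = 0 := by
      rw [setLIntegral_congr_fun measurableSet_Ico
        (fun h hh => vol_slice_pos_far htpos hh.1)]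
      simp
    have hnn1 : (0:ℝ) ≤ π * ((0:ℝ) - 0^3/3 - (-1 - (-1:ℝ)^3/3)) := by
      have : ((0:ℝ) - 0^3/3 - (-1 - (-1:ℝ)^3/3)) = 2/3 := by norm_num
      rw [this]
      positivity
    have hnn2 : (0:ℝ) ≤ π * ((t - 0) - (1/t^2) * ((t^3 - 0^3)/3)) := by
      have h2 : (0:ℝ) < t^2 := by positivity
      have h3 : (1/t^2) * ((t^3 - 0^3)/3) = t/3 := by field_simp; ring
      rw [h3]
      have : (0:ℝ) ≤ t - 0 - t/3 := by linarith
      exact mul_nonneg Real.pi_pos.le this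
    rw [p1, p2, p3, add_zero, ← ENNReal.ofReal_add hnn1 hnn2]
    have htne : t ≠ 0 := ne_of_gt htpos
    congr 1
    field_simp
    ring

def Q3 (y : Fin 3 → ℝ) : ℝ := ∑ a, (y a)^2

lemma Q3_measurable : Measurable Q3 := by
  unfold Q3
  exact Finset.measurable_sum _ fun a _ => (measurable_pi_apply a).pow_const 2

lemma Q3_nonneg (y : Fin 3 → ℝ) : 0 ≤ Q3 y := Finset.sum_nonneg fun _ _ => sq_nonneg _

lemma norm_E3 (x : E3) : ‖x‖ = √(∑ a, (x a)^2) := by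
  rw [EuclideanSpace.norm_eq]
  congr 1
  exact Finset.sum_congr rfl fun a _ => by rw [Real.norm_eq_abs, sq_abs]

lemma coord_measurable (i : Fin 3) : Measurable fun x : E3 => x i :=
  (measurable_pi_apply i).comp ((MeasurableEquiv.toLp 2 (Fin 3 → ℝ)).symm).measurable

/-- the solid cone over the cap, as a measurable set -/
lemma coneRegion_measurable (i : Fin 3) (t : ℝ) :
    MeasurableSet {x : E3 | 0 < ‖x‖ ∧ ‖x‖ < 1 ∧ x i ≤ t * ‖x‖} := by
  refine MeasurableSet.inter ?_ (MeasurableSet.inter ?_ ?_)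
  · exact measurableSet_lt measurable_const measurable_norm
  · exact measurableSet_lt measurable_norm measurable_const
  · exact measurableSet_le (coord_measurable i) (measurable_const.mul measurable_norm)

lemma volume_coneRegion (i : Fin 3) (t : ℝ) (htm : -1 ≤ t) (ht1 : t < 1) :
    volume {x : E3 | 0 < ‖x‖ ∧ ‖x‖ < 1 ∧ x i ≤ t * ‖x‖} = ENNReal.ofReal (2*π*(1+t)/3) := by
  set V : Set E3 := {x : E3 | 0 < ‖x‖ ∧ ‖x‖ < 1 ∧ x i ≤ t * ‖x‖} with hV
  -- step 1 : to the product space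
  have h1 : volume V =
      volume (((MeasurableEquiv.toLp 2 (Fin 3 → ℝ)).symm).symm ⁻¹' V) :=
    ((EuclideanSpace.volume_preserving_symm_measurableEquiv_toLp (Fin 3)).symm).measure_preimage
      (coneRegion_measurable i t).nullMeasurableSet |>.symm
  have hW : (((MeasurableEquiv.toLp 2 (Fin 3 → ℝ)).symm).symm ⁻¹' V)
      = {y : Fin 3 → ℝ | 0 < Q3 y ∧ Q3 y < 1 ∧ y i ≤ t * √(Q3 y)} := by
    ext y
    have hcoe : ∀ a : Fin 3, (((MeasurableEquiv.toLp 2 (Fin 3 → ℝ)).symm).symm y) a = y a :=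
      fun a => rfl
    have hnorm : ‖((MeasurableEquiv.toLp 2 (Fin 3 → ℝ)).symm).symm y‖ = √(Q3 y) := by
      rw [norm_E3]
      congr 1
    have hQ := Q3_nonneg y
    simp only [Set.mem_preimage, hV, Set.mem_setOf_eq, hnorm, hcoe]
    rw [Real.sqrt_pos, Real.sqrt_lt' one_pos, one_pow]
  rw [h1, hW]
  -- step 2 : split off coordinate i
  have h2 := (MeasurePreserving.symm _ (volume_preserving_piFinSuccAbove (fun _ : Fin 3 => ℝ) i)).measure_preimage
    (s := {y : Fin 3 → ℝ | 0 < Q3 y ∧ Q3 y < 1 ∧ y i ≤ t * √(Q3 y)})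
    (by
      refine (MeasurableSet.inter ?_ (MeasurableSet.inter ?_ ?_)).nullMeasurableSet
      · exact measurableSet_lt measurable_const Q3_measurable
      · exact measurableSet_lt Q3_measurable measurable_const
      · exact measurableSet_le (measurable_pi_apply i)
          (measurable_const.mul Q3_measurable.sqrt))
  rw [← h2]
  have hU : ((MeasurableEquiv.piFinSuccAbove (fun _ : Fin 3 => ℝ) i).symm ⁻¹'
        {y : Fin 3 → ℝ | 0 < Q3 y ∧ Q3 y < 1 ∧ y i ≤ t * √(Q3 y)})
      = {p : ℝ × (Fin 2 → ℝ) | p.2 ∈ slice t p.1} := by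
    ext p
    have happ : (MeasurableEquiv.piFinSuccAbove (fun _ : Fin 3 => ℝ) i).symm p
        = i.insertNth p.1 p.2 := by
      rw [MeasurableEquiv.piFinSuccAbove_symm_apply]
      rfl
    have hsum : Q3 (i.insertNth p.1 p.2) = p.1^2 + Q2 p.2 := by
      have h := Fin.sum_univ_succAbove (n := 2) (M := ℝ)
        (fun a => ((i.insertNth p.1 p.2 : Fin 3 → ℝ) a)^2) i
      simp only [Fin.insertNth_apply_same, Fin.insertNth_apply_succAbove] at h
      unfold Q3 Q2
      exact h
    simp only [Set.mem_preimage, happ, Set.mem_setOf_eq, hsum, slice,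
      Fin.insertNth_apply_same]
  rw [hU]
  -- step 3 : Fubini
  have h3 : (volume : Measure (ℝ × (Fin 2 → ℝ))) {p : ℝ × (Fin 2 → ℝ) | p.2 ∈ slice t p.1}
      = ∫⁻ h : ℝ, volume (slice t h) := by
    rw [Measure.volume_eq_prod, Measure.prod_apply]
    · rfl
    · -- measurability of the combined set
      have : {p : ℝ × (Fin 2 → ℝ) | p.2 ∈ slice t p.1}
          = {p : ℝ × (Fin 2 → ℝ) | 0 < p.1^2 + Q2 p.2 ∧ p.1^2 + Q2 p.2 < 1
              ∧ p.1 ≤ t * √(p.1^2 + Q2 p.2)} := rfl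
      rw [this]
      have hm : Measurable fun p : ℝ × (Fin 2 → ℝ) => p.1^2 + Q2 p.2 :=
        (measurable_fst.pow_const 2).add (Q2_measurable.comp measurable_snd)
      refine MeasurableSet.inter ?_ (MeasurableSet.inter ?_ ?_)
      · exact measurableSet_lt measurable_const hm
      · exact measurableSet_lt hm measurable_const
      · exact measurableSet_le measurable_fst (measurable_const.mul hm.sqrt)
  rw [h3, lintegral_slices t htm ht1]

lemma abs_coord_le (Ω : S2) (i : Fin 3) : |(Ω : E3) i| ≤ 1 := by
  have hn : ‖(Ω : E3)‖ = 1 := mem_sphere_zero_iff_norm.mp Ω.2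
  have h1 : |(Ω : E3) i| = √(((Ω : E3) i)^2) := (Real.sqrt_sq_eq_abs _).symm
  rw [h1, ← hn, norm_E3]
  exact Real.sqrt_le_sqrt (Finset.single_le_sum
    (fun a (_ : a ∈ Finset.univ) => sq_nonneg ((Ω : E3) a)) (Finset.mem_univ i))

lemma sphereMeasure_univ : sphereMeasure (Set.univ : Set S2) = ENNReal.ofReal (4*π) := by
  rw [sphereMeasure, Measure.toSphere_apply_univ, EuclideanSpace.volume_ball]
  have hsne : √π ≠ 0 := ne_of_gt (Real.sqrt_pos.mpr Real.pi_pos)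
  have hs2 : √π^2 = π := Real.sq_sqrt Real.pi_pos.le
  have hG : Real.Gamma ((Fintype.card (Fin 3)) / 2 + 1) = 3/4*√π := by
    rw [Fintype.card_fin]
    have h32 : ((3:ℕ):ℝ)/2 + 1 = 3/2 + 1 := by norm_num
    rw [h32, Real.Gamma_add_one (by norm_num)]
    have h12 : (3:ℝ)/2 = 1/2 + 1 := by norm_num
    rw [h12, Real.Gamma_add_one (by norm_num), Real.Gamma_one_half_eq]
    ring
  rw [hG]
  have hval : √π ^ Fintype.card (Fin 3) / (3/4*√π) = 4*π/3 := by
    rw [Fintype.card_fin]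
    have : (√π:ℝ)^3 = π * √π := by
      rw [pow_succ, hs2]
    rw [this]
    field_simp
  rw [hval, finrank_euclideanSpace_fin, ENNReal.ofReal_one, one_pow, one_mul]
  rw [show ((3:ℕ):ℝ≥0∞) = ENNReal.ofReal (3:ℝ) by simp]
  rw [← ENNReal.ofReal_mul (by norm_num)]
  congr 1
  ring

lemma cap_measurableSet (i : Fin 3) (t : ℝ) :
    MeasurableSet {Ω : S2 | (Ω : E3) i ≤ t} := by
  exact measurableSet_le ((coord_measurable i).comp measurable_subtype_coe) measurable_const

lemma sphereMeasure_cap (i : Fin 3) (t : ℝ) :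
    sphereMeasure {Ω : S2 | (Ω : E3) i ≤ t}
      = ENNReal.ofReal (2*π) * volume (Set.Iic t ∩ Set.Icc (-1:ℝ) 1) := by
  rcases lt_or_ge t (-1) with ht | htm
  · -- empty cap
    have hcap : {Ω : S2 | (Ω : E3) i ≤ t} = ∅ := by
      ext Ω
      simp only [Set.mem_setOf_eq, Set.mem_empty_iff_false, iff_false, not_le]
      have := abs_coord_le Ω i
      rw [abs_le] at this
      linarith [this.1]
    have hI : Set.Iic t ∩ Set.Icc (-1:ℝ) 1 = ∅ := by
      ext x
      simp only [Set.mem_inter_iff, Set.mem_Iic, Set.mem_Icc, Set.mem_empty_iff_false, iff_false]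
      rintro ⟨h1, h2, _⟩
      linarith
    rw [hcap, hI, measure_empty, measure_empty, mul_zero]
  rcases lt_or_ge t 1 with ht1 | ht1
  · -- main case
    have hIic : Set.Iic t ∩ Set.Icc (-1:ℝ) 1 = Set.Icc (-1) t := by
      ext x
      simp only [Set.mem_inter_iff, Set.mem_Iic, Set.mem_Icc]
      constructor
      · rintro ⟨h1, h2, _⟩; exact ⟨h2, h1⟩
      · rintro ⟨h1, h2⟩; exact ⟨h2, h1, by linarith⟩
    rw [hIic, Real.volume_Icc, sphereMeasure_apply (cap_measurableSet i t)]
    have hset : {x : E3 | 0 < ‖x‖ ∧ ‖x‖ < 1 ∧ ‖x‖⁻¹ • x ∈ Subtype.val '' {Ω : S2 | (Ω : E3) i ≤ t}}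
        = {x : E3 | 0 < ‖x‖ ∧ ‖x‖ < 1 ∧ x i ≤ t * ‖x‖} := by
      ext x
      simp only [Set.mem_setOf_eq]
      constructor
      · rintro ⟨h0, h1, hmem⟩
        rw [mem_val_image] at hmem
        obtain ⟨hy, hmem⟩ := hmem
        simp only [Set.mem_setOf_eq] at hmem
        have hcoord : (‖x‖⁻¹ • x) i = ‖x‖⁻¹ * x i := rfl
        rw [hcoord] at hmem
        refine ⟨h0, h1, ?_⟩
        have h2 := mul_le_mul_of_nonneg_left hmem h0.le
        have h3 : ‖x‖ * (‖x‖⁻¹ * x i) = x i := by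
          field_simp
        rw [h3] at h2
        linarith [h2]
      · rintro ⟨h0, h1, hle⟩
        refine ⟨h0, h1, ?_⟩
        have hy : ‖x‖⁻¹ • x ∈ sphere (0:E3) 1 := by
          rw [mem_sphere_zero_iff_norm, norm_smul, Real.norm_eq_abs, abs_of_pos (by positivity),
            inv_mul_cancel₀ (ne_of_gt h0)]
        rw [mem_val_image]
        refine ⟨hy, ?_⟩
        simp only [Set.mem_setOf_eq]
        have hcoord : ((‖x‖⁻¹ • x : E3)) i = ‖x‖⁻¹ * x i := rfl
        rw [hcoord]
        have h2 := mul_le_mul_of_nonneg_left hle (inv_nonneg.mpr (norm_nonneg x))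
        have h3 : ‖x‖⁻¹ * (t * ‖x‖) = t := by
          field_simp
        rw [h3] at h2
        linarith [h2]
    rw [hset, volume_coneRegion i t htm ht1]
    rw [show (3:ℝ≥0∞) = ENNReal.ofReal (3:ℝ) by norm_num]
    rw [← ENNReal.ofReal_mul (by norm_num), ← ENNReal.ofReal_mul (by positivity)]
    congr 1
    ring
  · -- full sphere
    have hcap : {Ω : S2 | (Ω : E3) i ≤ t} = Set.univ := by
      ext Ω
      simp only [Set.mem_setOf_eq, Set.mem_univ, iff_true]
      have := abs_coord_le Ω i
      rw [abs_le] at this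
      linarith [this.2]
    have hI : Set.Iic t ∩ Set.Icc (-1:ℝ) 1 = Set.Icc (-1) 1 := by
      ext x
      simp only [Set.mem_inter_iff, Set.mem_Iic, Set.mem_Icc]
      constructor
      · rintro ⟨h1, h2⟩; exact h2
      · rintro ⟨h1, h2⟩; exact ⟨by linarith, h1, h2⟩
    rw [hcap, hI, sphereMeasure_univ, Real.volume_Icc]
    rw [← ENNReal.ofReal_mul (by positivity)]
    congr 1
    norm_num
    ring

lemma coord_cont (i : Fin 3) : Continuous fun Ω : S2 => (Ω : E3) i := by
  have h1 : Continuous fun x : E3 => x i := by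
    exact (continuous_apply i).comp (PiLp.continuous_ofLp 2 (fun _ : Fin 3 => ℝ))
  exact h1.comp continuous_subtype_val

instance : IsFiniteMeasure sphereMeasure :=
  inferInstanceAs (IsFiniteMeasure (volume : Measure E3).toSphere)

lemma map_coord (i : Fin 3) :
    Measure.map (fun Ω : S2 => (Ω : E3) i) sphereMeasure
      = ENNReal.ofReal (2*π) • (volume.restrict (Set.Icc (-1:ℝ) 1)) := by
  have hφ : Measurable fun Ω : S2 => (Ω : E3) i := (coord_cont i).measurable
  haveI : IsFiniteMeasure (Measure.map (fun Ω : S2 => (Ω : E3) i) sphereMeasure) := by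
    constructor
    rw [Measure.map_apply hφ MeasurableSet.univ]
    exact measure_lt_top _ _
  apply Measure.ext_of_Iic
  intro t
  rw [Measure.map_apply hφ measurableSet_Iic]
  have hpre : (fun Ω : S2 => (Ω : E3) i) ⁻¹' Set.Iic t = {Ω : S2 | (Ω : E3) i ≤ t} := rfl
  rw [hpre, sphereMeasure_cap, Measure.smul_apply, Measure.restrict_apply measurableSet_Iic,
    smul_eq_mul]

/-! ## basis utilities -/

lemma inner_eq_sum (x y : E3) : ⟪x, y⟫_ℝ = ∑ a, x a * y a := by
  rw [PiLp.inner_apply]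
  exact Finset.sum_congr rfl fun a _ => by
    simp [RCLike.inner_apply, conj_trivial, mul_comm]

lemma inner_eq_repr (b : OrthonormalBasis (Fin 3) ℝ E3) (x : E3) (l : Fin 3) :
    ⟪x, b l⟫_ℝ = b.repr x l := by
  rw [← b.repr.inner_map_map x (b l), b.repr_self, EuclideanSpace.inner_single_right]
  simp

lemma exists_basis_with (u : E3) (hu : ‖u‖ = 1) :
    ∃ b : OrthonormalBasis (Fin 3) ℝ E3, b 0 = u := by
  have hv : Orthonormal ℝ (({0} : Set (Fin 3)).restrict (fun _ => u)) := by
    rw [orthonormal_iff_ite]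
    intro i j
    have hij : i = j := Subtype.ext ((Set.mem_singleton_iff.mp i.2).trans
      (Set.mem_singleton_iff.mp j.2).symm)
    subst hij
    rw [if_pos rfl]
    have := real_inner_self_eq_norm_mul_norm u
    rw [show ({0} : Set (Fin 3)).restrict (fun _ => u) i = u from rfl]
    rw [this, hu]; norm_num
  obtain ⟨b, hb⟩ := hv.exists_orthonormalBasis_extension_of_card_eq
    (by simp [finrank_euclideanSpace_fin])
  exact ⟨b, hb 0 rfl⟩

lemma extend_orthonormal (R : Fin 3 → E3) (hR : Orthonormal ℝ R) :
    ∃ b : OrthonormalBasis (Fin 3) ℝ E3, ∀ l, b l = R l := by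
  have hres : Orthonormal ℝ ((Set.univ : Set (Fin 3)).restrict R) :=
    hR.comp _ Subtype.coe_injective
  obtain ⟨b, hb⟩ := hres.exists_orthonormalBasis_extension_of_card_eq
    (by simp [finrank_euclideanSpace_fin])
  exact ⟨b, fun l => hb l (Set.mem_univ l)⟩

/-! ## pushforward of a general direction & integrability -/

lemma map_inner (u : E3) (hu : ‖u‖ = 1) :
    Measure.map (fun Ω : S2 => ⟪(Ω : E3), u⟫_ℝ) sphereMeasure
      = ENNReal.ofReal (2*π) • (volume.restrict (Set.Icc (-1:ℝ) 1)) := by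
  obtain ⟨b, hb⟩ := exists_basis_with u hu
  have key : (fun Ω : S2 => ⟪(Ω : E3), u⟫_ℝ)
      = (fun Ω : S2 => (Ω : E3) 0) ∘ ⇑(sMap b.repr) := by
    funext Ω
    rw [← hb, inner_eq_repr]
    rfl
  rw [key, ← Measure.map_map (coord_cont 0).measurable (sMap b.repr).continuous.measurable,
    (sphereMap_measurePreserving b.repr).map_eq, map_coord 0]

lemma integrable_comp_inner (u : E3) (hu : ‖u‖ = 1) {g : ℝ → ℝ}
    (hg : IntegrableOn g (Set.Icc (-1:ℝ) 1)) :
    Integrable (fun Ω : S2 => g ⟪(Ω : E3), u⟫_ℝ) sphereMeasure := by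
  have hφ : Measurable fun Ω : S2 => ⟪(Ω : E3), u⟫_ℝ :=
    (continuous_subtype_val.inner continuous_const).measurable
  have hν : Integrable g (ENNReal.ofReal (2*π) • (volume.restrict (Set.Icc (-1:ℝ) 1))) :=
    hg.smul_measure ENNReal.ofReal_ne_top
  rw [← map_inner u hu] at hν
  exact (integrable_map_measure hν.1 hφ.aemeasurable).mp hν

/-! ## reflections -/

def negCoord (m : Fin 3) : E3 ≃ₗᵢ[ℝ] E3 :=
  LinearIsometryEquiv.piLpCongrRight 2
    (fun a => if a = m then LinearIsometryEquiv.neg ℝ else LinearIsometryEquiv.refl ℝ ℝ)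

lemma negCoord_apply (m : Fin 3) (x : E3) (l : Fin 3) :
    negCoord m x l = if l = m then -(x l) else x l := by
  unfold negCoord
  rw [LinearIsometryEquiv.piLpCongrRight_apply]
  by_cases h : l = m
  · subst h; simp
  · simp [h]

def reflIso (b : OrthonormalBasis (Fin 3) ℝ E3) (m : Fin 3) : E3 ≃ₗᵢ[ℝ] E3 :=
  (b.repr.trans (negCoord m)).trans b.repr.symm

lemma reflIso_inner (b : OrthonormalBasis (Fin 3) ℝ E3) (m : Fin 3) (x : E3) (l : Fin 3) :
    ⟪(reflIso b m) x, b l⟫_ℝ = (if l = m then -1 else 1) * ⟪x, b l⟫_ℝ := by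
  rw [inner_eq_repr, inner_eq_repr]
  have h1 : b.repr ((reflIso b m) x) = negCoord m (b.repr x) := by
    unfold reflIso
    rw [LinearIsometryEquiv.trans_apply, LinearIsometryEquiv.trans_apply,
      LinearIsometryEquiv.apply_symm_apply]
  rw [h1, negCoord_apply]
  by_cases h : l = m <;> simp [h]

lemma integral_zero_of_odd (T : E3 ≃ₗᵢ[ℝ] E3) (G : S2 → ℝ)
    (hodd : ∀ Ω, G (sMapFun T Ω) = -G Ω) : ∫ Ω, G Ω ∂sphereMeasure = 0 := by
  have h1 := (sphereMap_measurePreserving T).integral_comp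
    (sMap T).measurableEmbedding G
  have h2 : (∫ Ω, G (sMapFun T Ω) ∂sphereMeasure) = ∫ Ω, G Ω ∂sphereMeasure := h1
  have h3 : (∫ Ω, G (sMapFun T Ω) ∂sphereMeasure) = ∫ Ω, -G Ω ∂sphereMeasure := by
    congr 1
    funext Ω
    exact hodd Ω
  rw [h3, integral_neg] at h2
  linarith


end Ansatz

open Ansatz

/-- Lemma 3.2: for the ansatz `Î(Ω) = Σᵢ (1/(2π)) wᵢ fᵢ(Ω·Rᵢ)` built from an
orthonormal family `R₁,R₂,R₃` and nonnegative normalized profiles `fᵢ`, the mixed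
second moments along distinct `Rᵢ, Rⱼ` vanish; hence `Rᵀ E² R` is diagonal and each
`Rⱼ` is an eigenvector of the second-moment matrix `E²`. -/
theorem ansatz_eigenvectors
    (R : Fin 3 → E3) (hR : Orthonormal ℝ R)
    (w : Fin 3 → ℝ) (f : Fin 3 → ℝ → ℝ)
    (hf_nonneg : ∀ i, ∀ μ ∈ Set.Icc (-1 : ℝ) 1, 0 ≤ f i μ)
    (hf_int : ∀ i, IntegrableOn (f i) (Set.Icc (-1 : ℝ) 1))
    (hf_one : ∀ i, (∫ μ in (-1 : ℝ)..1, f i μ) = 1)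
    (I : sphere (0 : E3) 1 → ℝ)
    (hI : ∀ Ω, I Ω = ∑ i : Fin 3, (1 / (2 * π)) * w i * f i ⟪(Ω : E3), R i⟫_ℝ)
    (E2 : Matrix (Fin 3) (Fin 3) ℝ)
    (hE2 : ∀ a b, E2 a b = ∫ Ω, (Ω : E3) a * (Ω : E3) b * I Ω ∂sphereMeasure)
    (Rmat : Matrix (Fin 3) (Fin 3) ℝ)
    (hRmat : ∀ a j, Rmat a j = R j a) :
    (∀ i j, i ≠ j →
      (∫ Ω, ⟪(Ω : E3), R i⟫_ℝ * ⟪(Ω : E3), R j⟫_ℝ * I Ω ∂sphereMeasure) = 0) ∧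
    (∀ i j, i ≠ j → (Rmat.transpose * E2 * Rmat) i j = 0) ∧
    (∀ j, ∃ lam : ℝ, E2.mulVec (fun a => R j a) = fun a => lam * R j a) := by
  obtain ⟨b, hbR⟩ := extend_orthonormal R hR
  have hnormR : ∀ k, ‖R k‖ = 1 := fun k => hR.1 k
  have hΦbound : ∀ (Ω : S2) (l : Fin 3), |⟪(Ω : E3), R l⟫_ℝ| ≤ 1 := by
    intro Ω l
    have h := abs_real_inner_le_norm ((Ω : E3)) (R l)
    rw [mem_sphere_zero_iff_norm.mp Ω.2, hnormR l, one_mul] at h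
    exact h
  have hInt : ∀ k, Integrable (fun Ω : S2 => f k ⟪(Ω : E3), R k⟫_ℝ) sphereMeasure :=
    fun k => integrable_comp_inner (R k) (hnormR k) (hf_int k)
  have hΦcont : ∀ l : Fin 3, Continuous fun Ω : S2 => ⟪(Ω : E3), R l⟫_ℝ :=
    fun l => continuous_subtype_val.inner continuous_const
  have hmulInt : ∀ i j k : Fin 3, Integrable
      (fun Ω : S2 => ⟪(Ω : E3), R i⟫_ℝ * ⟪(Ω : E3), R j⟫_ℝ *
        (1 / (2 * π) * w k * f k ⟪(Ω : E3), R k⟫_ℝ)) sphereMeasure := by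
    intro i j k
    have h0 : (fun Ω : S2 => ⟪(Ω : E3), R i⟫_ℝ * ⟪(Ω : E3), R j⟫_ℝ *
          (1 / (2 * π) * w k * f k ⟪(Ω : E3), R k⟫_ℝ))
        = fun Ω : S2 => (⟪(Ω : E3), R i⟫_ℝ * ⟪(Ω : E3), R j⟫_ℝ * (1 / (2 * π) * w k)) *
            (f k ⟪(Ω : E3), R k⟫_ℝ) := by
      funext Ω; ring
    rw [h0]
    apply (hInt k).bdd_mul (c := |1 / (2 * π) * w k|)
    · exact (((hΦcont i).mul (hΦcont j)).mul continuous_const).aestronglyMeasurable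
    · refine ae_of_all _ fun Ω => ?_
      rw [Real.norm_eq_abs, abs_mul, abs_mul]
      have h1 := hΦbound Ω i
      have h2 := hΦbound Ω j
      have h3 : |⟪(Ω : E3), R i⟫_ℝ| * |⟪(Ω : E3), R j⟫_ℝ| ≤ 1 := by
        nlinarith [abs_nonneg (⟪(Ω : E3), R i⟫_ℝ), abs_nonneg (⟪(Ω : E3), R j⟫_ℝ)]
      have h4 := mul_le_mul_of_nonneg_right h3 (abs_nonneg (1 / (2 * π) * w k))
      rw [one_mul] at h4
      exact h4
  -- ## Part 1
  have part1 : ∀ i j, i ≠ j →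
      (∫ Ω, ⟪(Ω : E3), R i⟫_ℝ * ⟪(Ω : E3), R j⟫_ℝ * I Ω ∂sphereMeasure) = 0 := by
    intro i j hij
    have hIeq : (fun Ω : S2 => ⟪(Ω : E3), R i⟫_ℝ * ⟪(Ω : E3), R j⟫_ℝ * I Ω)
        = fun Ω : S2 => ∑ k : Fin 3, (⟪(Ω : E3), R i⟫_ℝ * ⟪(Ω : E3), R j⟫_ℝ *
            (1 / (2 * π) * w k * f k ⟪(Ω : E3), R k⟫_ℝ)) := by
      funext Ω
      rw [hI Ω, Finset.mul_sum]
    rw [hIeq, integral_finset_sum _ (fun k _ => hmulInt i j k)]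
    apply Finset.sum_eq_zero
    intro k _
    have main : ∀ m : Fin 3, m ≠ k → ((m = i ∧ m ≠ j) ∨ (m = j ∧ m ≠ i)) →
        (∫ Ω, ⟪(Ω : E3), R i⟫_ℝ * ⟪(Ω : E3), R j⟫_ℝ *
          (1 / (2 * π) * w k * f k ⟪(Ω : E3), R k⟫_ℝ) ∂sphereMeasure) = 0 := by
      intro m hmk hmij
      apply integral_zero_of_odd (reflIso b m)
      intro Ω
      have hsign : ∀ l : Fin 3,
          ⟪((sMapFun (reflIso b m) Ω : S2) : E3), R l⟫_ℝ
            = (if l = m then -1 else 1) * ⟪(Ω : E3), R l⟫_ℝ := by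
        intro l
        have hc : ((sMapFun (reflIso b m) Ω : S2) : E3) = (reflIso b m) (Ω : E3) := rfl
        rw [hc, ← hbR l, reflIso_inner b m]
      rw [hsign i, hsign j, hsign k,
        if_neg (show ¬ (k = m) from fun hc => hmk hc.symm), one_mul]
      rcases hmij with ⟨h1, h2⟩ | ⟨h1, h2⟩
      · rw [if_pos (show i = m from h1.symm),
          if_neg (show ¬ (j = m) from fun hc => h2 hc.symm)]
        ring
      · rw [if_neg (show ¬ (i = m) from fun hc => h2 hc.symm),
          if_pos (show j = m from h1.symm)]
        ring
    by_cases h : k = i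
    · exact main j (fun hc => hij (hc.trans h).symm) (Or.inr ⟨rfl, Ne.symm hij⟩)
    · exact main i (fun hc => h hc.symm) (Or.inl ⟨rfl, hij⟩)
  -- ## integrability for part 2
  have hIntI : Integrable I sphereMeasure := by
    have h1 : Integrable (fun Ω : S2 => ∑ k : Fin 3, 1 / (2 * π) * w k * f k ⟪(Ω : E3), R k⟫_ℝ)
        sphereMeasure :=
      integrable_finset_sum _ (fun k _ => (hInt k).const_mul _)
    exact h1.congr (ae_of_all _ fun Ω => (hI Ω).symm)
  have hcoordInt : ∀ (i j a bb : Fin 3), Integrable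
      (fun Ω : S2 => R i a * ((Ω : E3) a * (Ω : E3) bb * I Ω) * R j bb) sphereMeasure := by
    intro i j a bb
    have h0 : (fun Ω : S2 => R i a * ((Ω : E3) a * (Ω : E3) bb * I Ω) * R j bb)
        = fun Ω : S2 => (R i a * ((Ω : E3) a * (Ω : E3) bb) * R j bb) * I Ω := by
      funext Ω; ring
    rw [h0]
    apply hIntI.bdd_mul (c := |R i a| * |R j bb|)
    · exact ((continuous_const.mul ((coord_cont a).mul (coord_cont bb))).mul
        continuous_const).aestronglyMeasurable
    · refine ae_of_all _ fun Ω => ?_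
      rw [Real.norm_eq_abs, abs_mul, abs_mul, abs_mul]
      have h1 := abs_coord_le Ω a
      have h2 := abs_coord_le Ω bb
      have h3 : |(Ω : E3) a| * |(Ω : E3) bb| ≤ 1 := by
        nlinarith [abs_nonneg ((Ω : E3) a), abs_nonneg ((Ω : E3) bb)]
      have h4 : |R i a| * (|(Ω : E3) a| * |(Ω : E3) bb|) ≤ |R i a| * 1 :=
        mul_le_mul_of_nonneg_left h3 (abs_nonneg _)
      rw [mul_one] at h4
      exact mul_le_mul_of_nonneg_right h4 (abs_nonneg _)
  -- ## Part 2
  have key2 : ∀ i j : Fin 3,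
      (∫ Ω, ⟪(Ω : E3), R i⟫_ℝ * ⟪(Ω : E3), R j⟫_ℝ * I Ω ∂sphereMeasure)
        = ∑ bb, ∑ a, R i a * E2 a bb * R j bb := by
    intro i j
    have hptwise : (fun Ω : S2 => ⟪(Ω : E3), R i⟫_ℝ * ⟪(Ω : E3), R j⟫_ℝ * I Ω)
        = fun Ω : S2 => ∑ bb, ∑ a, R i a * ((Ω : E3) a * (Ω : E3) bb * I Ω) * R j bb := by
      funext Ω
      rw [inner_eq_sum, inner_eq_sum, Finset.sum_mul_sum]
      simp only [Finset.sum_mul]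
      rw [Finset.sum_comm]
      apply Finset.sum_congr rfl
      intro bb _
      apply Finset.sum_congr rfl
      intro a _
      ring
    rw [hptwise, integral_finset_sum _
      (fun bb _ => integrable_finset_sum _ (fun a _ => hcoordInt i j a bb))]
    apply Finset.sum_congr rfl
    intro bb _
    rw [integral_finset_sum _ (fun a _ => hcoordInt i j a bb)]
    apply Finset.sum_congr rfl
    intro a _
    rw [hE2, MeasureTheory.integral_mul_const, MeasureTheory.integral_const_mul]
  have part2 : ∀ i j, i ≠ j → (Rmat.transpose * E2 * Rmat) i j = 0 := by
    intro i j hij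
    have hmat : (Rmat.transpose * E2 * Rmat) i j = ∑ bb, ∑ a, R i a * E2 a bb * R j bb := by
      rw [Matrix.mul_apply]
      apply Finset.sum_congr rfl
      intro bb _
      rw [Matrix.mul_apply, Finset.sum_mul]
      apply Finset.sum_congr rfl
      intro a _
      rw [Matrix.transpose_apply, hRmat, hRmat]
    rw [hmat, ← key2 i j, part1 i j hij]
  -- ## Part 3
  have hinner_mat : Rmat.transpose * Rmat = 1 := by
    ext i j
    rw [Matrix.mul_apply, Matrix.one_apply]
    have hsum : ∑ a, Rmat.transpose i a * Rmat a j = ∑ a, (R i) a * (R j) a := by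
      apply Finset.sum_congr rfl
      intro a _
      rw [Matrix.transpose_apply, hRmat, hRmat]
    rw [hsum, ← inner_eq_sum, orthonormal_iff_ite.mp hR i j]
  have hRRT : Rmat * Rmat.transpose = 1 := mul_eq_one_comm.mp hinner_mat
  refine ⟨part1, part2, ?_⟩
  intro j
  set D := Matrix.diagonal (fun l => (Rmat.transpose * E2 * Rmat) l l) with hD
  have hdiag : Rmat.transpose * E2 * Rmat = D := by
    ext a c
    by_cases h : a = c
    · subst h
      rw [hD, Matrix.diagonal_apply_eq]
    · rw [hD, Matrix.diagonal_apply_ne _ h, part2 a c h]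
  have hE2eq : E2 = Rmat * D * Rmat.transpose := by
    calc E2 = (Rmat * Rmat.transpose) * E2 * (Rmat * Rmat.transpose) := by
          rw [hRRT, Matrix.one_mul, Matrix.mul_one]
      _ = Rmat * (Rmat.transpose * E2 * Rmat) * Rmat.transpose := by
          simp only [Matrix.mul_assoc]
      _ = Rmat * D * Rmat.transpose := by rw [hdiag]
  refine ⟨D j j, ?_⟩
  have hRvec : (fun a => R j a) = Rmat.mulVec (Pi.single j 1) := by
    funext a
    simp [Matrix.mulVec_single, hRmat]
  rw [hRvec, Matrix.mulVec_mulVec, hE2eq]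
  have hconj : Rmat * D * Rmat.transpose * Rmat = Rmat * D := by
    rw [Matrix.mul_assoc (Rmat * D), hinner_mat, Matrix.mul_one]
  rw [hconj, ← Matrix.mulVec_mulVec]
  have hDe : D.mulVec (Pi.single j 1) = (D j j) • (Pi.single j 1 : Fin 3 → ℝ) := by
    funext a
    by_cases h : a = j
    · subst h
      simp [Matrix.mulVec_single, hD, Pi.single_apply]
    · simp [Matrix.mulVec_single, hD, Pi.single_apply, h, Matrix.diagonal_apply_ne _ h]
  rw [hDe, Matrix.mulVec_smul, ← hRvec]
  funext a
  simp [smul_eq_mul]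

end
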